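/- The slot structure 𝕊 satisfies every query γ_i, and every homomorphism witnessing γ_i in 𝕊 maps the distinguished variable to b: for each 1 ≤ i ≤ k there exist vertices x, y, y' of 𝕊 with y ≠ y', x →^{l_i} y, and x →^{r_i} y', and for every such triple, x = b. -/
import Mathlib


/-- The smallest equivalence relation on words over `α` generated by
`w ++ lᵢ ++ v ≃ w ++ rᵢ ++ v` for pairs `(lᵢ, rᵢ) ∈ P`. -/
def ThueEq {α : Type} (P : List (List α × List α)) : List α → List α → Prop :=
  Relation.EqvGen (fun u v => ∃ x y p, p ∈ P ∧ u = x ++ p.1 ++ y ∧ v = x ++ p.2 ++ y)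

/-- `LPath E w s t`: there is a path from `s` to `t` whose edges are labeled by the word `w`. -/
def LPath {α V : Type} (E : α → V → V → Prop) : List α → V → V → Prop
  | [] => fun s t => s = t
  | R :: w => fun s t => ∃ u, E R s u ∧ LPath E w u t

/-- The two vertices `b`, `c` of the slot structure 𝕊. -/
inductive Slot : Type | b | c
deriving DecidableEq

/-- Edges of 𝕊 : for each `R`, `R(b,b)`, `R(b,c)`, `R(c,c)` hold and `R(c,b)` does not. -/
def SEdge {α : Type} (_ : α) (s t : Slot) : Prop := ¬(s = Slot.c ∧ t = Slot.b)

/-- Predicate `A` of 𝕊 : holds exactly at `b`. -/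
def SA (s : Slot) : Prop := s = Slot.b

lemma lpath_b_b {α : Type} (w : List α) : LPath (SEdge (α := α)) w Slot.b Slot.b := by
  induction w with
  | nil => rfl
  | cons a w ih => exact ⟨Slot.b, by simp [SEdge], ih⟩

lemma lpath_b_c {α : Type} (w : List α) (hw : w ≠ []) :
    LPath (SEdge (α := α)) w Slot.b Slot.c := by
  induction w with
  | nil => exact absurd rfl hw
  | cons a w ih =>
    cases w with
    | nil => exact ⟨Slot.c, by simp [SEdge], rfl⟩
    | cons b' w' => exact ⟨Slot.b, by simp [SEdge], ih (by simp)⟩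

lemma lpath_c {α : Type} (w : List α) (t : Slot)
    (h : LPath (SEdge (α := α)) w Slot.c t) : t = Slot.c := by
  induction w with
  | nil => exact h.symm
  | cons a w ih =>
    obtain ⟨u, hu, hp⟩ := h
    cases u with
    | b => exact absurd ⟨rfl, rfl⟩ hu
    | c => exact ih hp

theorem slot_satisfies_gamma {α : Type} [Fintype α] (P : List (List α × List α))
    (hP : ∀ p ∈ P, p.1 ≠ [] ∧ p.2 ≠ []) :
    ∀ p ∈ P,
      (∃ x y y' : Slot, y ≠ y' ∧ LPath (SEdge (α := α)) p.1 x y ∧ LPath (SEdge (α := α)) p.2 x y') ∧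
      (∀ x y y' : Slot, y ≠ y' → LPath (SEdge (α := α)) p.1 x y →
        LPath (SEdge (α := α)) p.2 x y' → x = Slot.b) := by
  intro p hp
  refine ⟨⟨Slot.b, Slot.b, Slot.c, by simp, lpath_b_b _, lpath_b_c _ (hP p hp).2⟩, ?_⟩
  intro x y y' hne h1 h2
  cases x with
  | b => rfl
  | c => exact absurd ((lpath_c _ _ h1).trans (lpath_c _ _ h2).symm) hne
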